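/- (Existence of a primal solution.) Let m₀ ∈ M(𝕋) and set y₀ = Φ̃(m₀) ∈ ℝ^L. Then the primal problem min { ‖m‖_TV : m ∈ M(𝕋), Φ̃(m) = y₀ } admits a solution: there exists m⋆ ∈ M(𝕋) with Φ̃(m⋆) = y₀ such that ‖m⋆‖_TV ≤ ‖m‖_TV for every m ∈ M(𝕋) with Φ̃(m) = y₀. -/

import Mathlib

open MeasureTheory
open scoped ENNReal

/-- Total variation norm of a finite signed measure: `‖m‖_TV = m⁺(univ) + m⁻(univ)`. -/
noncomputable def tvNorm {X : Type*} [MeasurableSpace X] (m : SignedMeasure X) : ℝ :=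
  (m.totalVariation Set.univ).toReal

/-- Pairing of a function with a signed measure: `∫ η dm = ∫ η dm⁺ − ∫ η dm⁻`. -/
noncomputable def pairing {X : Type*} [MeasurableSpace X]
    (η : X → ℝ) (m : SignedMeasure X) : ℝ :=
  (∫ x, η x ∂m.toJordanDecomposition.posPart) - ∫ x, η x ∂m.toJordanDecomposition.negPart

lemma aux_sum_extend {ι κ M : Type*} [Fintype ι] [Fintype κ] [AddCommMonoid M]
    {e : ι → κ} (hinj : Function.Injective e) (F : κ → M) (G : ι → M)
    (h1 : ∀ i, F (e i) = G i) (h0 : ∀ j, (¬ ∃ i, e i = j) → F j = 0) :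
    ∑ j, F j = ∑ i, G i := by
  classical
  have hs : ∑ j, F j = ∑ j ∈ Finset.univ.image e, F j := by
    refine (Finset.sum_subset (Finset.subset_univ _) ?_).symm
    intro j _ hj
    refine h0 j fun ⟨i, hi⟩ => hj ?_
    exact Finset.mem_image.mpr ⟨i, Finset.mem_univ i, hi⟩
  rw [hs, Finset.sum_image (fun a _ b _ h => hinj h)]
  exact Finset.sum_congr rfl fun i _ => h1 i

/-- Carathéodory: the convex hull of a compact set in a finite-dimensional normed space
is compact. -/
lemma aux_isCompact_convexHull {E : Type*} [NormedAddCommGroup E] [NormedSpace ℝ E]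
    [FiniteDimensional ℝ E] {s : Set E} (hs : IsCompact s) (hne : s.Nonempty) :
    IsCompact (convexHull ℝ s) := by
  classical
  obtain ⟨x₀, hx₀⟩ := hne
  set N := Module.finrank ℝ E + 1 with hN
  have key : convexHull ℝ s =
      (fun p : (Fin N → ℝ) × (Fin N → E) => ∑ j, p.1 j • p.2 j) ''
        (stdSimplex ℝ (Fin N) ×ˢ Set.univ.pi fun _ => s) := by
    apply Set.Subset.antisymm
    · intro v hv
      obtain ⟨ι, hι, z, w, hzs, hai, hw0, hw1, hx⟩ := eq_pos_convex_span_of_mem_convexHull hv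
      have hcard : Fintype.card ι ≤ N := by
        rcases isEmpty_or_nonempty ι with h | h
        · simp [Fintype.card_eq_zero]
        · have h1 := hai.finrank_vectorSpan_add_one
          have h2 : Module.finrank ℝ (vectorSpan ℝ (Set.range z)) ≤ Module.finrank ℝ E :=
            Submodule.finrank_le _
          omega
      obtain ⟨e⟩ := Function.Embedding.nonempty_of_card_le
        (hcard.trans_eq (Fintype.card_fin N).symm)
      have hinj : Function.Injective e := e.injective
      set w' : Fin N → ℝ := Function.extend e w 0 with hw'
      set z' : Fin N → E := Function.extend e z fun _ => x₀ with hz'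
      have hw'0 : ∀ j, 0 ≤ w' j := by
        intro j
        rcases em (∃ i, (e : ι → Fin N) i = j) with ⟨i, rfl⟩ | h
        · rw [hw', hinj.extend_apply]; exact (hw0 i).le
        · rw [hw', Function.extend_apply' _ _ _ h]; rfl
      have hw'1 : ∑ j, w' j = 1 := by
        rw [aux_sum_extend hinj w' w (fun i => by rw [hw', hinj.extend_apply])
          (fun j h => by rw [hw', Function.extend_apply' _ _ _ h]; rfl)]
        exact hw1
      have hz's : ∀ j, z' j ∈ s := by
        intro j
        rcases em (∃ i, (e : ι → Fin N) i = j) with ⟨i, rfl⟩ | h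
        · rw [hz', hinj.extend_apply]; exact hzs (Set.mem_range_self i)
        · rw [hz', Function.extend_apply' _ _ _ h]; exact hx₀
      have hsum' : ∑ j, w' j • z' j = v := by
        rw [aux_sum_extend hinj (fun j => w' j • z' j) (fun i => w i • z i) ?_ ?_]
        · exact hx
        · intro i; simp only [hw', hz', hinj.extend_apply]
        · intro j h
          simp only [hw', hz', Function.extend_apply' _ _ _ h, Pi.zero_apply, zero_smul]
      exact ⟨(w', z'), ⟨⟨hw'0, hw'1⟩, fun j _ => hz's j⟩, hsum'⟩
    · rintro v ⟨⟨w, z⟩, ⟨⟨hw0, hw1⟩, hz⟩, rfl⟩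
      have := Finset.univ.centerMass_mem_convexHull (fun i _ => hw0 i)
        (by rw [hw1]; norm_num) (fun i _ => hz i (Set.mem_univ i))
      rwa [Finset.centerMass_eq_of_sum_1 _ _ hw1] at this
  rw [key]
  refine (((isCompact_stdSimplex ℝ _).prod (isCompact_univ_pi fun _ => hs)).image ?_)
  exact continuous_finset_sum _ fun j _ =>
    ((continuous_apply j).comp continuous_fst).smul ((continuous_apply j).comp continuous_snd)

set_option linter.unusedSectionVars false

section Aux

variable {X : Type*} [MeasurableSpace X] [TopologicalSpace X] [OpensMeasurableSpace X]
  [CompactSpace X] [T2Space X]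

lemma aux_integrable {E : Type*} [NormedAddCommGroup E] {f : X → E} (hf : Continuous f)
    (μ : Measure X) [IsFiniteMeasure μ] : Integrable f μ :=
  hf.integrable_of_hasCompactSupport (isClosed_tsupport _).isCompact

lemma aux_jordan_eq (μ ν : Measure X) [IsFiniteMeasure μ] [IsFiniteMeasure ν] :
    (μ.toSignedMeasure - ν.toSignedMeasure).toJordanDecomposition.posPart + ν
      = (μ.toSignedMeasure - ν.toSignedMeasure).toJordanDecomposition.negPart + μ := by
  set m := μ.toSignedMeasure - ν.toSignedMeasure with hm
  have h1 : m.toJordanDecomposition.posPart.toSignedMeasure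
      - m.toJordanDecomposition.negPart.toSignedMeasure = μ.toSignedMeasure - ν.toSignedMeasure :=
    m.toSignedMeasure_toJordanDecomposition
  rw [← Measure.toSignedMeasure_eq_toSignedMeasure_iff, Measure.toSignedMeasure_add,
    Measure.toSignedMeasure_add]
  have h2 := sub_eq_sub_iff_add_eq_add.mp h1
  rw [h2]; abel

lemma aux_pairing_sub {η : X → ℝ} (hη : Continuous η)
    (μ ν : Measure X) [IsFiniteMeasure μ] [IsFiniteMeasure ν] :
    pairing η (μ.toSignedMeasure - ν.toSignedMeasure) = (∫ x, η x ∂μ) - ∫ x, η x ∂ν := by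
  have hkey := aux_jordan_eq μ ν
  have h2 : ∫ x, η x ∂((μ.toSignedMeasure - ν.toSignedMeasure).toJordanDecomposition.posPart + ν)
      = ∫ x, η x ∂((μ.toSignedMeasure - ν.toSignedMeasure).toJordanDecomposition.negPart + μ) := by
    rw [hkey]
  rw [integral_add_measure (aux_integrable hη _) (aux_integrable hη _),
    integral_add_measure (aux_integrable hη _) (aux_integrable hη _)] at h2
  unfold pairing
  linarith

lemma aux_tvNorm_sub_le (μ ν : Measure X) [IsFiniteMeasure μ] [IsFiniteMeasure ν] :
    tvNorm (μ.toSignedMeasure - ν.toSignedMeasure)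
      ≤ (μ Set.univ).toReal + (ν Set.univ).toReal := by
  set m := μ.toSignedMeasure - ν.toSignedMeasure with hm
  set p := m.toJordanDecomposition.posPart with hp
  set n := m.toJordanDecomposition.negPart with hn
  have hkey : p + ν = n + μ := aux_jordan_eq μ ν
  obtain ⟨u, hu, hpu, hnu⟩ := m.toJordanDecomposition.mutuallySingular
  have h1 : p Set.univ ≤ μ Set.univ := by
    have e1 : p Set.univ = p uᶜ := by
      rw [← measure_add_measure_compl hu, hpu, zero_add]
    have e2 : p uᶜ + ν uᶜ = n uᶜ + μ uᶜ := by
      have := congrArg (fun ρ : Measure X => ρ uᶜ) hkey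
      simpa [Measure.add_apply] using this
    have : p uᶜ ≤ μ uᶜ := by
      rw [hnu, zero_add] at e2
      calc p uᶜ ≤ p uᶜ + ν uᶜ := le_self_add
        _ = μ uᶜ := e2
    exact e1 ▸ this.trans (measure_mono (Set.subset_univ _))
  have h2 : n Set.univ ≤ ν Set.univ := by
    have e1 : n Set.univ = n u := by
      rw [← measure_add_measure_compl hu, hnu, add_zero]
    have e2 : p u + ν u = n u + μ u := by
      have := congrArg (fun ρ : Measure X => ρ u) hkey
      simpa [Measure.add_apply] using this
    have : n u ≤ ν u := by
      rw [hpu, zero_add] at e2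
      calc n u ≤ n u + μ u := le_self_add
        _ = ν u := e2.symm
    exact e1 ▸ this.trans (measure_mono (Set.subset_univ _))
  have htv : m.totalVariation Set.univ = p Set.univ + n Set.univ := by
    rw [SignedMeasure.totalVariation, Measure.add_apply]
  rw [tvNorm, htv, ENNReal.toReal_add (measure_ne_top _ _) (measure_ne_top _ _)]
  gcongr
  · exact measure_ne_top _ _
  · exact measure_ne_top _ _

end Aux

section Aux2

variable {X : Type*} [MeasurableSpace X] [TopologicalSpace X] [OpensMeasurableSpace X]
  [CompactSpace X] [T2Space X] [Nonempty X]

/-- Jensen: the average of a continuous map lies in the convex hull of its range. -/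
lemma aux_integral_mem {E : Type*} [NormedAddCommGroup E] [NormedSpace ℝ E]
    [FiniteDimensional ℝ E] {Φ : X → E} (hΦ : Continuous Φ)
    (μ : Measure X) [IsFiniteMeasure μ] :
    ∃ c ∈ convexHull ℝ (Set.range Φ), ∫ x, Φ x ∂μ = (μ Set.univ).toReal • c := by
  rcases eq_or_ne (μ Set.univ) 0 with h0 | h0
  · refine ⟨Φ (Classical.arbitrary X), subset_convexHull ℝ _ (Set.mem_range_self _), ?_⟩
    rw [Measure.measure_univ_eq_zero.mp h0]
    simp
  · set a : ℝ≥0∞ := μ Set.univ with ha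
    have hane : a ≠ ⊤ := measure_ne_top _ _
    have hprob : IsProbabilityMeasure (a⁻¹ • μ) :=
      ⟨by simp [Measure.smul_apply, ← ha, ENNReal.inv_mul_cancel h0 hane]⟩
    have hcl : IsClosed (convexHull ℝ (Set.range Φ)) :=
      (aux_isCompact_convexHull (isCompact_range hΦ) (Set.range_nonempty _)).isClosed
    have hmem : ∫ x, Φ x ∂(a⁻¹ • μ) ∈ convexHull ℝ (Set.range Φ) := by
      refine (convex_convexHull ℝ _).integral_mem hcl
        (Filter.Eventually.of_forall fun x => subset_convexHull ℝ _ (Set.mem_range_self x)) ?_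
      exact aux_integrable hΦ _
    refine ⟨∫ x, Φ x ∂(a⁻¹ • μ), hmem, ?_⟩
    have h1 : a.toReal ≠ 0 := ENNReal.toReal_ne_zero.mpr ⟨h0, hane⟩
    rw [integral_smul_measure, smul_smul, ENNReal.toReal_inv, mul_inv_cancel₀ h1, one_smul]

end Aux2

section Aux3

variable {X : Type*} [MeasurableSpace X] [TopologicalSpace X] [OpensMeasurableSpace X]
  [CompactSpace X] [T2Space X] [Nonempty X]

lemma aux_pairing_vec_mem {L : ℕ} (φ : Fin L → X → ℝ) (hφ : ∀ ℓ, Continuous (φ ℓ))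
    (m : SignedMeasure X) :
    ∃ c ∈ convexHull ℝ
        (Set.range (fun x (ℓ : Fin L) => φ ℓ x) ∪ -Set.range (fun x (ℓ : Fin L) => φ ℓ x)),
      (fun ℓ => pairing (φ ℓ) m) = tvNorm m • c := by
  classical
  set Φ : X → (Fin L → ℝ) := fun x ℓ => φ ℓ x with hΦdef
  have hΦ : Continuous Φ := continuous_pi hφ
  set p := m.toJordanDecomposition.posPart with hpdef
  set n := m.toJordanDecomposition.negPart with hndef
  obtain ⟨c₁, hc₁, h₁⟩ := aux_integral_mem hΦ p
  obtain ⟨c₂, hc₂, h₂⟩ := aux_integral_mem hΦ n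
  set a := (p Set.univ).toReal with hadef
  set b := (n Set.univ).toReal with hbdef
  have ha : 0 ≤ a := ENNReal.toReal_nonneg
  have hb : 0 ≤ b := ENNReal.toReal_nonneg
  have htv : tvNorm m = a + b := by
    rw [tvNorm, SignedMeasure.totalVariation, Measure.add_apply,
      ENNReal.toReal_add (measure_ne_top _ _) (measure_ne_top _ _)]
  have hvec : (fun ℓ => pairing (φ ℓ) m) = a • c₁ - b • c₂ := by
    funext ℓ
    have e1 : (∫ x, Φ x ∂p) ℓ = ∫ x, φ ℓ x ∂p :=
      ((ContinuousLinearMap.proj (R := ℝ) (φ := fun _ : Fin L => ℝ) ℓ).integral_comp_comm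
        (aux_integrable hΦ p)).symm
    have e2 : (∫ x, Φ x ∂n) ℓ = ∫ x, φ ℓ x ∂n :=
      ((ContinuousLinearMap.proj (R := ℝ) (φ := fun _ : Fin L => ℝ) ℓ).integral_comp_comm
        (aux_integrable hΦ n)).symm
    have : pairing (φ ℓ) m = (∫ x, Φ x ∂p) ℓ - (∫ x, Φ x ∂n) ℓ := by
      rw [e1, e2]; rfl
    rw [this, h₁, h₂]
    simp [hadef, hbdef]
  set D := Set.range Φ ∪ -Set.range Φ with hD
  have hc₁' : c₁ ∈ convexHull ℝ D := convexHull_mono Set.subset_union_left hc₁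
  have hc₂' : -c₂ ∈ convexHull ℝ D := by
    have h : -c₂ ∈ -convexHull ℝ (Set.range Φ) := Set.neg_mem_neg.mpr hc₂
    rw [← convexHull_neg] at h
    exact convexHull_mono Set.subset_union_right h
  rcases eq_or_lt_of_le (add_nonneg ha hb) with hab | hab
  · refine ⟨c₁, hc₁', ?_⟩
    have ha0 : a = 0 := by linarith
    have hb0 : b = 0 := by linarith
    rw [hvec, htv, ha0, hb0]
    simp
  · set c := (a/(a+b)) • c₁ + (b/(a+b)) • (-c₂) with hc
    have hmemc : c ∈ convexHull ℝ D :=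
      (convex_convexHull ℝ D) hc₁' hc₂' (div_nonneg ha hab.le) (div_nonneg hb hab.le)
        (by field_simp)
    refine ⟨c, hmemc, ?_⟩
    have hne : a + b ≠ 0 := hab.ne'
    have e1 : (a+b) * (a/(a+b)) = a := by field_simp
    have e2 : (a+b) * (b/(a+b)) = b := by field_simp
    rw [hvec, htv, hc, smul_add, smul_smul, smul_smul, e1, e2, smul_neg, ← sub_eq_add_neg]

lemma aux_realize {L : ℕ} [MeasurableSingletonClass X]
    (φ : Fin L → X → ℝ) (hφ : ∀ ℓ, Continuous (φ ℓ))
    {t : ℝ} (ht : 0 ≤ t) {c : Fin L → ℝ}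
    (hc : c ∈ convexHull ℝ
      (Set.range (fun x (ℓ : Fin L) => φ ℓ x) ∪ -Set.range (fun x (ℓ : Fin L) => φ ℓ x))) :
    ∃ m : SignedMeasure X, (∀ ℓ, pairing (φ ℓ) m = t * c ℓ) ∧ tvNorm m ≤ t := by
  classical
  set Φ : X → (Fin L → ℝ) := fun x ℓ => φ ℓ x with hΦdef
  rw [convexHull_eq] at hc
  obtain ⟨ι, tt, w, z, hw0, hw1, hz, hcm⟩ := hc
  rw [Finset.centerMass_eq_of_sum_1 _ _ hw1] at hcm
  have hpt : ∀ i ∈ tt, ∃ (q : X × Bool), z i = (if q.2 then Φ q.1 else -Φ q.1) := by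
    intro i hi
    rcases hz i hi with ⟨x, hx⟩ | hneg
    · exact ⟨(x, true), by simp [hx]⟩
    · rw [Set.mem_neg] at hneg
      obtain ⟨x, hx⟩ := hneg
      exact ⟨(x, false), by simp [hx]⟩
  choose! q hq using hpt
  set x : ι → X := fun i => (q i).1 with hxdef
  set σ : ι → Bool := fun i => (q i).2 with hσdef
  set μ : Measure X := ∑ i ∈ tt, (if σ i then ENNReal.ofReal (t * w i) else 0) • Measure.dirac (x i) with hμ
  set ν : Measure X := ∑ i ∈ tt, (if σ i then 0 else ENNReal.ofReal (t * w i)) • Measure.dirac (x i) with hν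
  have hfin1 : ∀ (a : ℝ≥0∞), a ≠ ⊤ → ∀ y : X, IsFiniteMeasure (a • Measure.dirac y) := by
    intro a ha y
    constructor
    simp only [Measure.smul_apply, smul_eq_mul, Measure.dirac_apply_of_mem (Set.mem_univ _),
      mul_one]
    exact ha.lt_top
  have hfin : ∀ (g : ι → ℝ≥0∞), (∀ i ∈ tt, g i ≠ ⊤) →
      IsFiniteMeasure (∑ i ∈ tt, g i • Measure.dirac (x i)) := by
    intro g hg
    constructor
    rw [Measure.finset_sum_apply]
    refine ENNReal.sum_lt_top.mpr fun i hi => ?_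
    simp only [Measure.smul_apply, smul_eq_mul, Measure.dirac_apply_of_mem (Set.mem_univ _),
      mul_one]
    exact (hg i hi).lt_top
  have hμfin : IsFiniteMeasure μ := hfin _ fun i hi => by split <;> simp
  have hνfin : IsFiniteMeasure ν := hfin _ fun i hi => by split <;> simp

  refine ⟨μ.toSignedMeasure - ν.toSignedMeasure, fun ℓ => ?_, ?_⟩
  · rw [aux_pairing_sub (hφ ℓ) μ ν]
    have hIμ : ∫ y, φ ℓ y ∂μ = ∑ i ∈ tt, (if σ i then t * w i else 0) * φ ℓ (x i) := by
      rw [hμ, integral_finset_sum_measure (fun i hi => by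
        haveI := hfin1 _ (by split <;> simp : (if σ i then ENNReal.ofReal (t * w i) else 0) ≠ ⊤) (x i)
        exact aux_integrable (hφ ℓ) _)]
      refine Finset.sum_congr rfl fun i hi => ?_
      rw [integral_smul_measure, integral_dirac]
      have : 0 ≤ t * w i := mul_nonneg ht (hw0 i hi)
      split <;> simp [ENNReal.toReal_ofReal this]
    have hIν : ∫ y, φ ℓ y ∂ν = ∑ i ∈ tt, (if σ i then 0 else t * w i) * φ ℓ (x i) := by
      rw [hν, integral_finset_sum_measure (fun i hi => by
        haveI := hfin1 _ (by split <;> simp : (if σ i then 0 else ENNReal.ofReal (t * w i)) ≠ ⊤) (x i)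
        exact aux_integrable (hφ ℓ) _)]
      refine Finset.sum_congr rfl fun i hi => ?_
      rw [integral_smul_measure, integral_dirac]
      have : 0 ≤ t * w i := mul_nonneg ht (hw0 i hi)
      split <;> simp [ENNReal.toReal_ofReal this]
    rw [hIμ, hIν, ← Finset.sum_sub_distrib]
    have hcℓ : c ℓ = ∑ i ∈ tt, w i * z i ℓ := by
      rw [← hcm]; simp [Finset.sum_apply]
    rw [hcℓ, Finset.mul_sum]
    refine Finset.sum_congr rfl fun i hi => ?_
    have hzi := hq i hi
    have hziℓ : z i ℓ = (if σ i then φ ℓ (x i) else -(φ ℓ (x i))) := by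
      rw [hzi]
      rcases Bool.eq_false_or_eq_true (σ i) with h | h <;>
        simp [hσdef, hxdef, h, hΦdef] at * <;> simp [hzi, h]
    rw [hziℓ]
    rcases Bool.eq_false_or_eq_true (σ i) with h | h <;> simp [h] <;> ring
  · refine (aux_tvNorm_sub_le μ ν).trans ?_
    have hμu : (μ Set.univ).toReal = ∑ i ∈ tt, (if σ i then t * w i else 0) := by
      rw [hμ, Measure.finset_sum_apply, ENNReal.toReal_sum (fun i hi => by split <;> simp)]
      refine Finset.sum_congr rfl fun i hi => ?_
      have : 0 ≤ t * w i := mul_nonneg ht (hw0 i hi)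
      simp only [Measure.smul_apply, smul_eq_mul, Measure.dirac_apply_of_mem (Set.mem_univ _),
        mul_one]
      split <;> simp [ENNReal.toReal_ofReal this]
    have hνu : (ν Set.univ).toReal = ∑ i ∈ tt, (if σ i then 0 else t * w i) := by
      rw [hν, Measure.finset_sum_apply, ENNReal.toReal_sum (fun i hi => by split <;> simp)]
      refine Finset.sum_congr rfl fun i hi => ?_
      have : 0 ≤ t * w i := mul_nonneg ht (hw0 i hi)
      simp only [Measure.smul_apply, smul_eq_mul, Measure.dirac_apply_of_mem (Set.mem_univ _),
        mul_one]
      split <;> simp [ENNReal.toReal_ofReal this]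
    rw [hμu, hνu, ← Finset.sum_add_distrib]
    have : ∑ i ∈ tt, ((if σ i then t * w i else 0) + if σ i then 0 else t * w i)
        = ∑ i ∈ tt, t * w i := by
      refine Finset.sum_congr rfl fun i hi => ?_
      split <;> ring
    rw [this, ← Finset.mul_sum, hw1, mul_one]

end Aux3

/-- **existence of a primal solution.** With continuous measurements
`φ_1, …, φ_L : 𝕋 → ℝ`, `Φ̃(m) = (∫ φ_ℓ dm)_ℓ`, and data `y₀ = Φ̃(m₀)`, the primal
problem `min { ‖m‖_TV : Φ̃(m) = y₀ }` admits a solution `m⋆`. -/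
theorem exists_primal_solution_continuous_basis_pursuit (T : ℝ) [Fact (0 < T)]
    (L : ℕ) (hL : 1 ≤ L) (φ : Fin L → AddCircle T → ℝ) (hφ : ∀ ℓ, Continuous (φ ℓ))
    (m₀ : SignedMeasure (AddCircle T)) (y₀ : Fin L → ℝ)
    (hy₀ : ∀ ℓ, pairing (φ ℓ) m₀ = y₀ ℓ) :
    ∃ mstar : SignedMeasure (AddCircle T),
      (∀ ℓ, pairing (φ ℓ) mstar = y₀ ℓ) ∧
      ∀ m : SignedMeasure (AddCircle T),
        (∀ ℓ, pairing (φ ℓ) m = y₀ ℓ) → tvNorm mstar ≤ tvNorm m := by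
  classical
  set Φ : AddCircle T → (Fin L → ℝ) := fun x ℓ => φ ℓ x with hΦ
  have hΦc : Continuous Φ := continuous_pi hφ
  set D := Set.range Φ ∪ -Set.range Φ with hD
  set C := convexHull ℝ D with hC
  have hCcomp : IsCompact C :=
    aux_isCompact_convexHull ((isCompact_range hΦc).union (isCompact_range hΦc).neg)
      ((Set.range_nonempty Φ).inl)
  have hmem : ∀ m : SignedMeasure (AddCircle T),
      ∃ c ∈ C, (fun ℓ => pairing (φ ℓ) m) = tvNorm m • c :=
    fun m => aux_pairing_vec_mem φ hφ m
  obtain ⟨c₀, hc₀, h₀⟩ := hmem m₀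
  have hy₀' : (fun ℓ => pairing (φ ℓ) m₀) = y₀ := funext hy₀
  set M := tvNorm m₀ with hM
  have hMnn : 0 ≤ M := ENNReal.toReal_nonneg
  have h₀' : M • c₀ = y₀ := by rw [← h₀, hy₀']
  set K : Set (ℝ × (Fin L → ℝ)) := (Set.Icc 0 M ×ˢ C) ∩ {p | p.1 • p.2 = y₀} with hK
  have hM₀K : (M, c₀) ∈ K := ⟨⟨⟨hMnn, le_refl M⟩, hc₀⟩, h₀'⟩
  have hKcomp : IsCompact K := by
    refine ((isCompact_Icc).prod hCcomp).inter_right ?_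
    have : IsClosed ((fun p : ℝ × (Fin L → ℝ) => p.1 • p.2) ⁻¹' {y₀}) :=
      isClosed_singleton.preimage (continuous_fst.smul continuous_snd)
    exact this
  obtain ⟨pstar, hpK, hpmin⟩ := hKcomp.exists_isMinOn ⟨(M, c₀), hM₀K⟩
    continuous_fst.continuousOn
  obtain ⟨⟨hpIcc, hpC⟩, hpfeas⟩ := hpK
  obtain ⟨mstar, hm1, hm2⟩ := aux_realize φ hφ hpIcc.1 hpC
  refine ⟨mstar, fun ℓ => ?_, fun m hm => ?_⟩
  · rw [hm1 ℓ]
    have := congrFun hpfeas ℓ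
    simpa using this
  · obtain ⟨c, hc, hveq⟩ := hmem m
    have hfeq : (fun ℓ => pairing (φ ℓ) m) = y₀ := funext hm
    have hy : tvNorm m • c = y₀ := by rw [← hveq, hfeq]
    have htm : 0 ≤ tvNorm m := ENNReal.toReal_nonneg
    have hstar_le : pstar.1 ≤ tvNorm m := by
      rcases le_or_gt (tvNorm m) M with hle | hlt
      · exact hpmin (⟨⟨⟨htm, hle⟩, hc⟩, hy⟩ : (tvNorm m, c) ∈ K)
      · exact (hpmin hM₀K).trans hlt.le
    exact hm2.trans hstar_le
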